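/- Let n ≥ 2, 1 ≤ m < n, ε > 0, θ_j = 2πj/n and ξ_j = e^{iθ_j} for j = 0, …, m−1. Let η be the measure on [0,2π) given by dη = dθ/(2π) + (ε/m) Σ_{j=0}^{m−1} δ_{θ_j}, and let K_{n−1}(ξ, z) = Σ_{l=0}^{n−1} conj(ξ)^l z^l. Then the monic polynomial Q(z) = z^n − [ (ε/m) / (1 + εn/m) ] Σ_{j=0}^{m−1} K_{n−1}(ξ_j, z) satisfies ∫₀^{2π} Q(e^{iθ}) e^{−ilθ} dη(θ) = 0 for every integer 0 ≤ l < n; that is, Q is the monic orthogonal polynomial of degree n for η. -/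

import Mathlib

open MeasureTheory Polynomial Real Set

noncomputable section

private lemma cont_integrable_dirac {f : ℝ → ℂ} (hf : Continuous f) (a : ℝ) :
    Integrable f (Measure.dirac a) := by
  refine ⟨hf.aestronglyMeasurable, ?_⟩
  simp only [HasFiniteIntegral, lintegral_dirac]
  exact ENNReal.coe_lt_top

private lemma moment_int (l a : ℕ) :
    (∫ θ in Set.Ico (0:ℝ) (2*π),
        Complex.exp (θ*Complex.I)^a * Complex.exp (-((l:ℝ)*θ:ℝ)*Complex.I))
      = if a = l then (2*π:ℂ) else 0 := by
  have hEq : ∀ θ : ℝ, Complex.exp (θ*Complex.I)^a * Complex.exp (-((l:ℝ)*θ:ℝ)*Complex.I)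
      = Complex.exp ((((a:ℂ)-(l:ℂ))*Complex.I)*θ) := by
    intro θ
    rw [← Complex.exp_nat_mul, ← Complex.exp_add]
    congr 1
    push_cast
    ring
  simp only [hEq]
  rw [MeasureTheory.integral_Ico_eq_integral_Ioo, ← MeasureTheory.integral_Ioc_eq_integral_Ioo,
    ← intervalIntegral.integral_of_le (by positivity : (0:ℝ) ≤ 2*π)]
  by_cases h : a = l
  · subst h
    simp
  · have hc : ((a:ℂ)-(l:ℂ))*Complex.I ≠ 0 := by
      apply mul_ne_zero _ Complex.I_ne_zero
      rw [sub_ne_zero]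
      exact_mod_cast h
    rw [integral_exp_mul_complex hc]
    have h2 : ((a:ℂ)-(l:ℂ))*Complex.I * ((2*π : ℝ) : ℂ) = ((((a:ℤ)-(l:ℤ)) : ℤ) : ℂ) * (2*π*Complex.I) := by
      push_cast; ring
    rw [h2, Complex.exp_int_mul_two_pi_mul_I]
    simp [h]

private lemma roots_sum_zero (n : ℕ) (hn : 0 < n) (d : ℤ) (hd : d ≠ 0) (hdn : d.natAbs < n) :
    ∑ i ∈ Finset.range n, Complex.exp (2*π*(d:ℝ)/n * Complex.I) ^ i = 0 := by
  set w : ℂ := Complex.exp (2*π*(d:ℝ)/n * Complex.I) with hw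
  have hn0 : (n:ℝ) ≠ 0 := Nat.cast_ne_zero.2 hn.ne'
  have hw1 : w ≠ 1 := by
    rw [hw, Ne, Complex.exp_eq_one_iff]
    rintro ⟨k, hk⟩
    have hI : (Complex.I) ≠ 0 := Complex.I_ne_zero
    have h1 : ((2*π*(d:ℝ)/n : ℝ) : ℂ) = ((k * (2*π) : ℝ) : ℂ) := by
      apply mul_right_cancel₀ hI
      push_cast
      push_cast at hk
      linear_combination hk
    have h2 : 2*π*(d:ℝ)/n = k * (2*π) := by exact_mod_cast h1
    have hπ : π ≠ 0 := Real.pi_ne_zero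
    have h3 : (d:ℝ) = k * n := by
      have h2' : (2*π) * (d:ℝ) = (2*π) * ((k:ℝ) * n) := by
        field_simp at h2
        linear_combination (2*π) * h2
      have h2π : (2*π:ℝ) ≠ 0 := by positivity
      exact mul_left_cancel₀ h2π h2'
    have h4 : d = k * n := by exact_mod_cast h3
    rcases eq_or_ne k 0 with hk0 | hk0
    · simp [hk0] at h4; exact hd h4
    · have hk1 : 1 ≤ |k| := Int.one_le_abs hk0
      have habs : |d| = |k| * n := by
        rw [h4, abs_mul, abs_of_nonneg (by positivity : (0:ℤ) ≤ (n:ℤ))]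
      have hlt : |d| < (n:ℤ) := by
        rw [Int.abs_eq_natAbs]; exact_mod_cast hdn
      nlinarith [hlt, habs, hk1]
  have hwn : w ^ n = 1 := by
    rw [hw, ← Complex.exp_nat_mul]
    have hcn : (n:ℂ) ≠ 0 := Nat.cast_ne_zero.2 hn.ne'
    have : (n:ℂ) * (2*(π:ℂ)*(d:ℝ)/n * Complex.I) = (d:ℤ) * (2*π*Complex.I) := by
      push_cast
      field_simp
    rw [this, Complex.exp_int_mul_two_pi_mul_I]
  rw [geom_sum_eq hw1, hwn, sub_self, zero_div]

theorem rakhmanov_explicit_construction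
    (n m : ℕ) (hn : 2 ≤ n) (hm : 1 ≤ m) (hmn : m < n)
    (ε : ℝ) (hε : 0 < ε)
    (η : Measure ℝ)
    (hη : η = (ENNReal.ofReal (1 / (2 * π))) • volume.restrict (Set.Ico (0 : ℝ) (2 * π))
      + ∑ j ∈ Finset.range m, ENNReal.ofReal (ε / m) • Measure.dirac (2 * π * j / n))
    (Q : Polynomial ℂ)
    (hQ : Q = Polynomial.X ^ n -
      Polynomial.C ((((ε / m) / (1 + ε * n / m) : ℝ)) : ℂ) *
        ∑ j ∈ Finset.range m, ∑ i ∈ Finset.range n,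
          Polynomial.C ((starRingEnd ℂ
            (Complex.exp (2 * π * (j : ℝ) / n * Complex.I))) ^ i) * Polynomial.X ^ i) :
    ∀ l < n, ∫ θ : ℝ, Q.eval (Complex.exp (θ * Complex.I)) *
      Complex.exp (-((l : ℝ) * θ : ℝ) * Complex.I) ∂η = 0 := by
  intro l hl
  have hπ : (0:ℝ) < π := Real.pi_pos
  have hn0 : (n:ℝ) ≠ 0 := Nat.cast_ne_zero.2 (by omega)
  have hm0 : (m:ℝ) ≠ 0 := Nat.cast_ne_zero.2 (by omega)
  set c : ℝ := (ε / m) / (1 + ε * n / m) with hc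
  -- step 1: rewrite the integrand
  have hfeq : ∀ θ : ℝ, Q.eval (Complex.exp (θ * Complex.I)) *
      Complex.exp (-((l : ℝ) * θ : ℝ) * Complex.I)
      = Complex.exp (θ * Complex.I) ^ n * Complex.exp (-((l : ℝ) * θ : ℝ) * Complex.I)
        - (c:ℂ) * ∑ j ∈ Finset.range m, ∑ i ∈ Finset.range n,
            (starRingEnd ℂ (Complex.exp (2 * π * (j : ℝ) / n * Complex.I))) ^ i *
              (Complex.exp (θ * Complex.I) ^ i *
                Complex.exp (-((l : ℝ) * θ : ℝ) * Complex.I)) := by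
    intro θ
    rw [hQ]
    simp only [Polynomial.eval_sub, Polynomial.eval_pow, Polynomial.eval_X, Polynomial.eval_mul,
      Polynomial.eval_C, Polynomial.eval_finset_sum]
    simp only [sub_mul, Finset.sum_mul, mul_assoc]
  simp only [hfeq]
  -- continuity
  have hE : Continuous (fun θ : ℝ => Complex.exp (-((l : ℝ) * θ : ℝ) * Complex.I)) := by
    fun_prop
  have hgc : ∀ i : ℕ, Continuous (fun θ : ℝ =>
      Complex.exp (θ * Complex.I) ^ i * Complex.exp (-((l : ℝ) * θ : ℝ) * Complex.I)) := by
    intro i; fun_prop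
  have hFc : Continuous (fun θ : ℝ =>
      Complex.exp (θ * Complex.I) ^ n * Complex.exp (-((l : ℝ) * θ : ℝ) * Complex.I)
        - (c:ℂ) * ∑ j ∈ Finset.range m, ∑ i ∈ Finset.range n,
            (starRingEnd ℂ (Complex.exp (2 * π * (j : ℝ) / n * Complex.I))) ^ i *
              (Complex.exp (θ * Complex.I) ^ i *
                Complex.exp (-((l : ℝ) * θ : ℝ) * Complex.I))) := by
    apply Continuous.sub (hgc n)
    apply Continuous.mul continuous_const
    apply continuous_finset_sum
    intro j _
    apply continuous_finset_sum
    intro i _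
    exact Continuous.mul continuous_const (hgc i)
  -- step 2: split the measure
  rw [hη, integral_add_measure
      (((hFc.integrableOn_Icc (a := 0) (b := 2*π)).mono_set Ico_subset_Icc_self).smul_measure
        ENNReal.ofReal_ne_top)
      (integrable_finset_sum_measure.2 fun j _ =>
        (cont_integrable_dirac hFc _).smul_measure ENNReal.ofReal_ne_top),
    integral_smul_measure,
    integral_finset_sum_measure fun j _ =>
      (cont_integrable_dirac hFc _).smul_measure ENNReal.ofReal_ne_top]
  simp only [integral_smul_measure, integral_dirac,
    ENNReal.toReal_ofReal (by positivity : (0:ℝ) ≤ 1/(2*π)),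
    ENNReal.toReal_ofReal (by positivity : (0:ℝ) ≤ ε/m)]
  -- Lebesgue part
  have hGc : Continuous (fun θ : ℝ => (c:ℂ) * ∑ j ∈ Finset.range m, ∑ i ∈ Finset.range n,
      (starRingEnd ℂ (Complex.exp (2 * π * (j : ℝ) / n * Complex.I))) ^ i *
        (Complex.exp (θ * Complex.I) ^ i *
          Complex.exp (-((l : ℝ) * θ : ℝ) * Complex.I))) := by
    apply Continuous.mul continuous_const
    apply continuous_finset_sum
    intro j _
    apply continuous_finset_sum
    intro i _
    exact Continuous.mul continuous_const (hgc i)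
  have hLeb : (∫ x in Set.Ico (0:ℝ) (2*π),
      (Complex.exp ((x:ℂ)*Complex.I)^n * Complex.exp (-((l:ℝ)*x:ℝ)*Complex.I)
       - (c:ℂ) * ∑ j ∈ Finset.range m, ∑ i ∈ Finset.range n,
          (starRingEnd ℂ (Complex.exp (2*π*(j:ℝ)/n*Complex.I)))^i *
            (Complex.exp ((x:ℂ)*Complex.I)^i * Complex.exp (-((l:ℝ)*x:ℝ)*Complex.I))))
      = -((c:ℂ) * (2*(π:ℝ)) * ∑ j ∈ Finset.range m,
          (starRingEnd ℂ (Complex.exp (2*π*(j:ℝ)/n*Complex.I)))^l) := by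
    have hrowc : ∀ j : ℕ, Continuous (fun θ : ℝ => ∑ i ∈ Finset.range n,
        (starRingEnd ℂ (Complex.exp (2*π*(j:ℝ)/n*Complex.I)))^i *
          (Complex.exp ((θ:ℂ)*Complex.I)^i *
            Complex.exp (-((l:ℝ)*θ:ℝ)*Complex.I))) := by
      intro j
      exact continuous_finset_sum _ (fun i _ => Continuous.mul continuous_const (hgc i))
    rw [integral_sub ((hgc n).integrableOn_Icc.mono_set Ico_subset_Icc_self)
        (hGc.integrableOn_Icc.mono_set Ico_subset_Icc_self),
      moment_int l n, if_neg (by omega : ¬ n = l),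
      MeasureTheory.integral_const_mul,
      MeasureTheory.integral_finset_sum _ (fun j _ =>
        ((hrowc j).integrableOn_Icc.mono_set Ico_subset_Icc_self))]
    have hrow : ∀ j : ℕ, (∫ x in Set.Ico (0:ℝ) (2*π), ∑ i ∈ Finset.range n,
        (starRingEnd ℂ (Complex.exp (2*π*(j:ℝ)/n*Complex.I)))^i *
          (Complex.exp ((x:ℂ)*Complex.I)^i * Complex.exp (-((l:ℝ)*x:ℝ)*Complex.I)))
        = (starRingEnd ℂ (Complex.exp (2*π*(j:ℝ)/n*Complex.I)))^l * (2*(π:ℝ)) := by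
      intro j
      rw [MeasureTheory.integral_finset_sum _ (fun i _ =>
        ((Continuous.fun_mul continuous_const (hgc i)).integrableOn_Icc.mono_set
          Ico_subset_Icc_self))]
      simp only [MeasureTheory.integral_const_mul, moment_int, mul_ite, mul_zero]
      rw [Finset.sum_ite_eq' (Finset.range n) l]
      simp [hl]
    simp only [hrow]
    rw [zero_sub, ← Finset.sum_mul]
    ring
  rw [hLeb]
  -- Dirac part
  have hDir : ∀ j ∈ Finset.range m,
      (Complex.exp (((2*π*(j:ℝ)/n : ℝ) : ℂ) * Complex.I)^n *
          Complex.exp (-((l:ℝ)*(2*π*(j:ℝ)/n) : ℝ) * Complex.I)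
        - (c:ℂ) * ∑ k ∈ Finset.range m, ∑ i ∈ Finset.range n,
            (starRingEnd ℂ (Complex.exp (2*π*(k:ℝ)/n*Complex.I)))^i *
              (Complex.exp (((2*π*(j:ℝ)/n : ℝ) : ℂ) * Complex.I)^i *
                Complex.exp (-((l:ℝ)*(2*π*(j:ℝ)/n) : ℝ) * Complex.I)))
      = (1 - (c:ℂ)*(n:ℂ)) *
          (starRingEnd ℂ (Complex.exp (2*π*(j:ℝ)/n*Complex.I)))^l := by
    intro j hj
    have hj' : j < m := Finset.mem_range.1 hj
    have hξn : Complex.exp (((2*π*(j:ℝ)/n : ℝ) : ℂ) * Complex.I) ^ n = 1 := by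
      rw [← Complex.exp_nat_mul]
      have harg : (n:ℂ) * (((2*π*(j:ℝ)/n : ℝ) : ℂ) * Complex.I)
          = (((j:ℤ) : ℤ) : ℂ) * (2*π*Complex.I) := by
        have hcn : (n:ℂ) ≠ 0 := Nat.cast_ne_zero.2 (by omega)
        push_cast
        field_simp
      rw [harg, Complex.exp_int_mul_two_pi_mul_I]
    have hsum : ∀ k ∈ Finset.range m, (∑ i ∈ Finset.range n,
        (starRingEnd ℂ (Complex.exp (2*π*(k:ℝ)/n*Complex.I)))^i *
          (Complex.exp (((2*π*(j:ℝ)/n : ℝ) : ℂ) * Complex.I)^i *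
            Complex.exp (-((l:ℝ)*(2*π*(j:ℝ)/n) : ℝ) * Complex.I)))
        = (if k = j then (n:ℂ) else 0) *
            Complex.exp (-((l:ℝ)*(2*π*(j:ℝ)/n) : ℝ) * Complex.I) := by
      intro k hk
      have hk' : k < m := Finset.mem_range.1 hk
      have hbase : ∀ i : ℕ, (starRingEnd ℂ (Complex.exp (2*π*(k:ℝ)/n*Complex.I)))^i *
          Complex.exp (((2*π*(j:ℝ)/n : ℝ) : ℂ) * Complex.I)^i
          = Complex.exp (2*π*(((((j:ℤ)-(k:ℤ)) : ℤ):ℝ))/n * Complex.I) ^ i := by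
        intro i
        rw [← mul_pow]
        congr 1
        rw [← Complex.exp_conj, ← Complex.exp_add]
        congr 1
        simp only [map_mul, map_div₀, Complex.conj_I, Complex.conj_ofReal, map_ofNat,
          map_natCast]
        push_cast
        ring
      have hfac : (∑ i ∈ Finset.range n,
          (starRingEnd ℂ (Complex.exp (2*π*(k:ℝ)/n*Complex.I)))^i *
            (Complex.exp (((2*π*(j:ℝ)/n : ℝ) : ℂ) * Complex.I)^i *
              Complex.exp (-((l:ℝ)*(2*π*(j:ℝ)/n) : ℝ) * Complex.I)))
          = (∑ i ∈ Finset.range n,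
              Complex.exp (2*π*(((((j:ℤ)-(k:ℤ)) : ℤ):ℝ))/n * Complex.I) ^ i) *
            Complex.exp (-((l:ℝ)*(2*π*(j:ℝ)/n) : ℝ) * Complex.I) := by
        rw [Finset.sum_mul]
        refine Finset.sum_congr rfl fun i _ => ?_
        rw [← mul_assoc, hbase i]
      rw [hfac]
      by_cases hkj : k = j
      · subst hkj
        simp
      · rw [roots_sum_zero n (by omega) ((j:ℤ)-(k:ℤ)) (by omega) (by omega)]
        simp [hkj]
    rw [hξn, Finset.sum_congr rfl hsum, ← Finset.sum_mul, Finset.sum_ite_eq', if_pos hj]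
    have hEc : Complex.exp (-((l:ℝ)*(2*π*(j:ℝ)/n) : ℝ) * Complex.I)
        = (starRingEnd ℂ (Complex.exp (2*π*(j:ℝ)/n*Complex.I))) ^ l := by
      rw [← Complex.exp_conj, ← Complex.exp_nat_mul]
      congr 1
      simp only [map_mul, map_div₀, Complex.conj_I, Complex.conj_ofReal, map_ofNat,
        map_natCast]
      push_cast
      ring
    rw [hEc]
    ring
  rw [Finset.sum_congr rfl (fun j hj => congrArg (fun z : ℂ => (ε/m : ℝ) • z) (hDir j hj))]
  -- final scalar computation
  simp only [Complex.real_smul, ← mul_assoc, ← Finset.sum_mul]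
  rw [← Finset.mul_sum]
  set S : ℂ := ∑ j ∈ Finset.range m,
    (starRingEnd ℂ (Complex.exp (2*π*(j:ℝ)/n*Complex.I)))^l with hS
  have hden : (1 + ε * (n:ℝ) / m) ≠ 0 := by positivity
  have hkey : (1/(2*π)) * -(c*2*π) + ε/m*(1-c*(n:ℝ)) = 0 := by
    rw [hc]
    field_simp
    ring
  calc ((1/(2*π) : ℝ) : ℂ) * -((c:ℂ) * 2 * (π:ℝ) * S) + ((ε/m : ℝ) : ℂ) * (1 - (c:ℂ)*(n:ℂ)) * S
      = (((1/(2*π)) * -(c*2*π) + ε/m*(1-c*(n:ℝ)) : ℝ) : ℂ) * S := by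
        push_cast
        ring
    _ = 0 := by rw [hkey]; simp
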